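/- Let u(t) be a solution of the unperturbed Lorenz system with σ > 0, 0 < r < √2 - 1, b > 0, and V(u) = (1/σ)u₁² + u₂² + u₃², γ₁ = min{1, 1/σ}, γ₂ = min{1, 2-(r+1)², 2b}, γ₃ = max{1, 1/σ}. Then V(u(t)) ≤ V(u(0)) e^{-(γ₂/γ₃) t} for all t ≥ 0, and hence the origin is a globally exponentially stable equilibrium of the Lorenz system for these parameter values. -/

import Mathlib

/-- Exponential decay of the Lyapunov function along solutions of the non-chaotic
Lorenz system (`σ > 0`, `0 < r < √2 - 1`, `b > 0`):
`V(u(t)) ≤ V(u(0)) e^{-(γ₂/γ₃)t}`, hence the origin is globally exponentially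
stable. -/
theorem lorenz_global_exponential_stability
    (σ r b : ℝ) (hσ : 0 < σ) (hr0 : 0 < r) (hr : r < Real.sqrt 2 - 1) (hb : 0 < b)
    (γ₁ γ₂ γ₃ : ℝ)
    (hγ₁ : γ₁ = min 1 (1/σ))
    (hγ₂ : γ₂ = min 1 (min (2 - (r + 1)^2) (2*b)))
    (hγ₃ : γ₃ = max 1 (1/σ))
    (u₁ u₂ u₃ : ℝ → ℝ)
    (h₁ : ∀ t, HasDerivAt u₁ (σ*(-u₁ t + u₂ t)) t)
    (h₂ : ∀ t, HasDerivAt u₂ (-u₁ t * u₃ t + r * u₁ t - u₂ t) t)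
    (h₃ : ∀ t, HasDerivAt u₃ (u₁ t * u₂ t - b * u₃ t) t) :
    ∀ t, 0 ≤ t →
      (1/σ)*(u₁ t)^2 + (u₂ t)^2 + (u₃ t)^2
        ≤ ((1/σ)*(u₁ 0)^2 + (u₂ 0)^2 + (u₃ 0)^2) * Real.exp (-(γ₂/γ₃) * t) ∧
      γ₁ * ((u₁ t)^2 + (u₂ t)^2 + (u₃ t)^2)
        ≤ γ₃ * ((u₁ 0)^2 + (u₂ 0)^2 + (u₃ 0)^2) * Real.exp (-(γ₂/γ₃) * t) := by
  have h2 : (Real.sqrt 2) ^ 2 = 2 := Real.sq_sqrt (by norm_num)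
  have hr1 : (r + 1) ^ 2 < 2 := by
    have h1 : r + 1 < Real.sqrt 2 := by linarith
    have h0 : 0 < r + 1 := by linarith
    nlinarith
  have hσ' : 0 < 1/σ := by positivity
  have hγ₂pos : 0 < γ₂ := by
    rw [hγ₂]
    have : (0:ℝ) < 2 - (r+1)^2 := by linarith
    positivity
  have hγ₃pos : 0 < γ₃ := by rw [hγ₃]; positivity
  have hγ₃1 : 1 ≤ γ₃ := by rw [hγ₃]; exact le_max_left _ _
  have hγ₃σ : 1/σ ≤ γ₃ := by rw [hγ₃]; exact le_max_right _ _
  have hγ₂1 : γ₂ ≤ 1 := by rw [hγ₂]; exact min_le_left _ _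
  have hγ₂a : γ₂ ≤ 2 - (r+1)^2 := by
    rw [hγ₂]; exact le_trans (min_le_right _ _) (min_le_left _ _)
  have hγ₂b : γ₂ ≤ 2*b := by
    rw [hγ₂]; exact le_trans (min_le_right _ _) (min_le_right _ _)
  set k := γ₂/γ₃ with hk
  have hkpos : 0 < k := div_pos hγ₂pos hγ₃pos
  -- Lyapunov function
  set V : ℝ → ℝ := fun t => (1/σ)*(u₁ t)^2 + (u₂ t)^2 + (u₃ t)^2 with hV
  have hVd : ∀ t, HasDerivAt V
      ((1/σ)*(2*u₁ t*(σ*(-u₁ t + u₂ t))) + 2*u₂ t*(-u₁ t * u₃ t + r * u₁ t - u₂ t)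
        + 2*u₃ t*(u₁ t * u₂ t - b * u₃ t)) t := by
    intro t
    have d1 : HasDerivAt (fun t => (1/σ)*(u₁ t)^2) ((1/σ)*(2*u₁ t*(σ*(-u₁ t + u₂ t)))) t := by
      have := ((h₁ t).pow 2).const_mul (1/σ)
      simpa [mul_comm, mul_assoc, mul_left_comm] using this
    have d2 : HasDerivAt (fun t => (u₂ t)^2) (2*u₂ t*(-u₁ t * u₃ t + r * u₁ t - u₂ t)) t := by
      have := (h₂ t).pow 2
      simpa [Pi.pow_def, mul_comm, mul_assoc, mul_left_comm] using this
    have d3 : HasDerivAt (fun t => (u₃ t)^2) (2*u₃ t*(u₁ t * u₂ t - b * u₃ t)) t := by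
      have := (h₃ t).pow 2
      simpa [Pi.pow_def, mul_comm, mul_assoc, mul_left_comm] using this
    exact (d1.add d2).add d3
  -- g t = V t * exp (k t) is antitone
  set g : ℝ → ℝ := fun t => V t * Real.exp (k*t) with hg
  have hgd : ∀ t, HasDerivAt g
      (((1/σ)*(2*u₁ t*(σ*(-u₁ t + u₂ t))) + 2*u₂ t*(-u₁ t * u₃ t + r * u₁ t - u₂ t)
        + 2*u₃ t*(u₁ t * u₂ t - b * u₃ t)) * Real.exp (k*t)
        + V t * (Real.exp (k*t) * k)) t := by
    intro t
    have he : HasDerivAt (fun t => Real.exp (k*t)) (Real.exp (k*t) * k) t := by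
      simpa using (((hasDerivAt_id t).const_mul k).exp)
    exact (hVd t).mul he
  have hg' : ∀ t, ((1/σ)*(2*u₁ t*(σ*(-u₁ t + u₂ t))) + 2*u₂ t*(-u₁ t * u₃ t + r * u₁ t - u₂ t)
        + 2*u₃ t*(u₁ t * u₂ t - b * u₃ t)) * Real.exp (k*t)
        + V t * (Real.exp (k*t) * k) ≤ 0 := by
    intro t
    have hexp : 0 < Real.exp (k*t) := Real.exp_pos _
    have hVle : V t ≤ γ₃ * ((u₁ t)^2 + (u₂ t)^2 + (u₃ t)^2) := by
      have h1 : (1/σ)*(u₁ t)^2 ≤ γ₃ * (u₁ t)^2 :=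
        mul_le_mul_of_nonneg_right hγ₃σ (sq_nonneg _)
      have h2 : (u₂ t)^2 ≤ γ₃ * (u₂ t)^2 := by
        simpa using mul_le_mul_of_nonneg_right hγ₃1 (sq_nonneg (u₂ t))
      have h3 : (u₃ t)^2 ≤ γ₃ * (u₃ t)^2 := by
        simpa using mul_le_mul_of_nonneg_right hγ₃1 (sq_nonneg (u₃ t))
      simp only [hV, mul_add]
      exact add_le_add (add_le_add h1 h2) h3
    have hkV : V t * k ≤ γ₂ * ((u₁ t)^2 + (u₂ t)^2 + (u₃ t)^2) := by
      have hVnn : 0 ≤ (u₁ t)^2 + (u₂ t)^2 + (u₃ t)^2 := by positivity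
      have hVtnn : 0 ≤ V t := by simp only [hV]; positivity
      calc V t * k ≤ (γ₃ * ((u₁ t)^2 + (u₂ t)^2 + (u₃ t)^2)) * k :=
            mul_le_mul_of_nonneg_right hVle (le_of_lt hkpos)
        _ = γ₂ * ((u₁ t)^2 + (u₂ t)^2 + (u₃ t)^2) := by
            rw [hk, mul_comm (γ₃ * _) (γ₂ / γ₃), ← mul_assoc, div_mul_cancel₀ _ hγ₃pos.ne']
    have hVder : ((1/σ)*(2*u₁ t*(σ*(-u₁ t + u₂ t))) + 2*u₂ t*(-u₁ t * u₃ t + r * u₁ t - u₂ t)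
        + 2*u₃ t*(u₁ t * u₂ t - b * u₃ t)) ≤ -(γ₂ * ((u₁ t)^2 + (u₂ t)^2 + (u₃ t)^2)) := by
      have key : (1/σ)*(2*u₁ t*(σ*(-u₁ t + u₂ t))) = 2*u₁ t*(-u₁ t + u₂ t) := by
        field_simp
      rw [key]
      nlinarith [sq_nonneg (u₁ t - (r+1)*u₂ t), sq_nonneg (u₁ t), sq_nonneg (u₂ t),
        sq_nonneg (u₃ t)]
    have hder := mul_le_mul_of_nonneg_right hVder (le_of_lt hexp)
    have h2' : V t * (Real.exp (k*t) * k)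
        ≤ (γ₂ * ((u₁ t)^2 + (u₂ t)^2 + (u₃ t)^2)) * Real.exp (k*t) := by
      have hx : V t * (Real.exp (k*t) * k) = V t * k * Real.exp (k*t) := by ring
      rw [hx]
      exact mul_le_mul_of_nonneg_right hkV (le_of_lt hexp)
    have hz : (-(γ₂ * ((u₁ t)^2 + (u₂ t)^2 + (u₃ t)^2))) * Real.exp (k*t)
        + (γ₂ * ((u₁ t)^2 + (u₂ t)^2 + (u₃ t)^2)) * Real.exp (k*t) = 0 := by ring
    have hs := add_le_add hder h2'
    rw [hz] at hs
    exact hs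
  have hanti : Antitone g := by
    apply antitone_of_deriv_nonpos
    · exact fun t => ((hgd t).differentiableAt)
    · intro t
      rw [(hgd t).deriv]
      exact hg' t
  intro t ht
  have hmain : V t ≤ V 0 * Real.exp (-k * t) := by
    have hgt : g t ≤ g 0 := hanti ht
    have h0 : V t * Real.exp (k*t) ≤ V 0 := by simpa [hg] using hgt
    have hexp : 0 < Real.exp (k*t) := Real.exp_pos _
    have hd : V t ≤ V 0 / Real.exp (k*t) := (le_div_iff₀ hexp).2 h0
    rw [neg_mul, Real.exp_neg, ← div_eq_mul_inv]
    exact hd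
  have hmain' : (1/σ)*(u₁ t)^2 + (u₂ t)^2 + (u₃ t)^2
      ≤ ((1/σ)*(u₁ 0)^2 + (u₂ 0)^2 + (u₃ 0)^2) * Real.exp (-k * t) := by
    simpa only [hV] using hmain
  constructor
  · exact hmain'
  · have hlow : γ₁ * ((u₁ t)^2 + (u₂ t)^2 + (u₃ t)^2) ≤ V t := by
      have hγ₁1 : γ₁ ≤ 1 := by rw [hγ₁]; exact min_le_left _ _
      have hγ₁σ : γ₁ ≤ 1/σ := by rw [hγ₁]; exact min_le_right _ _
      have a1 : γ₁ * (u₁ t)^2 ≤ (1/σ) * (u₁ t)^2 :=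
        mul_le_mul_of_nonneg_right hγ₁σ (sq_nonneg _)
      have a2 : γ₁ * (u₂ t)^2 ≤ (u₂ t)^2 := by
        simpa using mul_le_mul_of_nonneg_right hγ₁1 (sq_nonneg (u₂ t))
      have a3 : γ₁ * (u₃ t)^2 ≤ (u₃ t)^2 := by
        simpa using mul_le_mul_of_nonneg_right hγ₁1 (sq_nonneg (u₃ t))
      simp only [hV, mul_add]
      exact add_le_add (add_le_add a1 a2) a3
    have hup : V 0 ≤ γ₃ * ((u₁ 0)^2 + (u₂ 0)^2 + (u₃ 0)^2) := by
      have a1 : (1/σ) * (u₁ 0)^2 ≤ γ₃ * (u₁ 0)^2 :=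
        mul_le_mul_of_nonneg_right hγ₃σ (sq_nonneg _)
      have a2 : (u₂ 0)^2 ≤ γ₃ * (u₂ 0)^2 := by
        simpa using mul_le_mul_of_nonneg_right hγ₃1 (sq_nonneg (u₂ 0))
      have a3 : (u₃ 0)^2 ≤ γ₃ * (u₃ 0)^2 := by
        simpa using mul_le_mul_of_nonneg_right hγ₃1 (sq_nonneg (u₃ 0))
      simp only [hV, mul_add]
      exact add_le_add (add_le_add a1 a2) a3
    have hexp : 0 < Real.exp (-k*t) := Real.exp_pos _
    have hlow' : γ₁ * ((u₁ t)^2 + (u₂ t)^2 + (u₃ t)^2)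
        ≤ (1/σ)*(u₁ t)^2 + (u₂ t)^2 + (u₃ t)^2 := by simpa only [hV] using hlow
    have hup' : (1/σ)*(u₁ 0)^2 + (u₂ 0)^2 + (u₃ 0)^2
        ≤ γ₃ * ((u₁ 0)^2 + (u₂ 0)^2 + (u₃ 0)^2) := by simpa only [hV] using hup
    calc γ₁ * ((u₁ t)^2 + (u₂ t)^2 + (u₃ t)^2)
        ≤ (1/σ)*(u₁ t)^2 + (u₂ t)^2 + (u₃ t)^2 := hlow'
      _ ≤ ((1/σ)*(u₁ 0)^2 + (u₂ 0)^2 + (u₃ 0)^2) * Real.exp (-k * t) := hmain'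
      _ ≤ γ₃ * ((u₁ 0)^2 + (u₂ 0)^2 + (u₃ 0)^2) * Real.exp (-k*t) :=
          mul_le_mul_of_nonneg_right hup' (le_of_lt hexp)
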